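/- Let q be an odd prime power and let X₁, X₂ be subsets of F_q with |X₁|·|X₂| > 2q. Then there exist x, y ∈ F_q such that x + y ∈ X₁ and x·y ∈ X₂. -/

import Mathlib

open Finset


section Aux
variable {F : Type*} [Field F] [Fintype F] [DecidableEq F]



lemma aux_sum_shift (hF : ringChar F ≠ 2) {a : F} (ha : a ≠ 0) :
    ∑ x : F, quadraticChar F (x * (x + a)) = -1 := by
  classical
  have h1 : ∑ x : F, quadraticChar F (x * (x + a))
      = ∑ x ∈ (univ : Finset F).erase 0, quadraticChar F (x * (x + a)) := by
    rw [Finset.sum_erase]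
    simp
  have h2 : ∑ x ∈ (univ : Finset F).erase 0, quadraticChar F (x * (x + a))
      = ∑ v ∈ (univ : Finset F).erase 1, quadraticChar F v := by
    apply Finset.sum_nbij' (fun x => 1 + a / x) (fun v => a / (v - 1))
    · intro x hx
      simp only [mem_erase, mem_univ, and_true] at hx ⊢
      intro hcon
      have : a / x = 0 := by linear_combination hcon
      exact ha (by field_simp at this; simpa using this)
    · intro v hv
      simp only [mem_erase, mem_univ, and_true] at hv ⊢
      intro hcon
      apply ha
      have := div_eq_iff (sub_ne_zero.mpr hv) |>.mp hcon
      simpa using this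
    · intro x hx
      simp only [mem_erase, mem_univ, and_true] at hx
      field_simp
      simp [ha]
    · intro v hv
      simp only [mem_erase, mem_univ, and_true] at hv
      have h1 : v - 1 ≠ 0 := sub_ne_zero.mpr hv
      field_simp
      ring
    · intro x hx
      simp only [mem_erase, mem_univ, and_true] at hx
      have : x * (x + a) = x ^ 2 * (1 + a / x) := by field_simp
      rw [this, map_mul, quadraticChar_sq_one' hx, one_mul]
  have h3 : ∑ v ∈ (univ : Finset F).erase 1, quadraticChar F v
      = (∑ v : F, quadraticChar F v) - quadraticChar F 1 :=
    Finset.sum_erase_eq_sub (mem_univ _)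
  rw [h1, h2, h3, quadraticChar_sum_zero hF, map_one]
  ring



lemma aux_sum_sq (hF : ringChar F ≠ 2) (f : F → ℤ) :
    ∑ s : F, f (s ^ 2) = ∑ t : F, (quadraticChar F t + 1) * f t := by
  classical
  rw [← Finset.sum_fiberwise' univ (fun s : F => s ^ 2) f]
  refine Finset.sum_congr rfl fun t _ => ?_
  rw [Finset.sum_const, nsmul_eq_mul]
  congr 1
  have hc := quadraticChar_card_sqrts hF t
  rw [← hc]
  congr 1
  simp [Set.toFinset_setOf]

lemma aux_chi_le (t : F) : quadraticChar F t ≤ 1 := by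
  by_cases h : t = 0
  · simp [h]
  · rcases quadraticChar_dichotomy h with h1 | h1 <;> omega

lemma aux_chi_sq (t : F) : (quadraticChar F t) ^ 2 = if t = 0 then 0 else 1 := by
  by_cases h : t = 0
  · simp [h]
  · rcases quadraticChar_dichotomy h with h1 | h1 <;> simp [h, h1]





lemma aux_inner (hF : ringChar F ≠ 2) (p p' : F) :
    ∑ t : F, quadraticChar F ((t - 4*p) * (t - 4*p')) =
      if p' = p then (Fintype.card F : ℤ) - 1 else -1 := by
  have h4 : (4 : F) ≠ 0 := by
    have h2 : (2:F) ≠ 0 := Ring.two_ne_zero hF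
    have h44 : (4:F) = 2*2 := by norm_num
    rw [h44]; exact mul_ne_zero h2 h2
  have hre : ∑ t : F, quadraticChar F ((t - 4*p) * (t - 4*p'))
      = ∑ u : F, quadraticChar F (u * (u + (4*p - 4*p'))) := by
    apply Fintype.sum_equiv (Equiv.subRight (4*p))
    intro t
    simp only [Equiv.subRight_apply]
    congr 1
    ring
  rw [hre]
  by_cases hpp : p' = p
  · subst hpp
    simp only [sub_self, add_zero, if_pos rfl]
    have step : ∑ u : F, quadraticChar F (u * u)
        = ∑ u : F, (if u = 0 then (0:ℤ) else 1) := by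
      refine Finset.sum_congr rfl fun u _ => ?_
      rw [map_mul, ← sq, aux_chi_sq]
    rw [step, Finset.sum_ite]
    simp only [Finset.sum_const_zero, Finset.sum_const, zero_add, nsmul_eq_mul, mul_one]
    rw [Finset.filter_ne', Finset.card_erase_of_mem (mem_univ _), card_univ]
    have : 0 < Fintype.card F := Fintype.card_pos
    push_cast [Nat.cast_sub this]
    ring
  · rw [if_neg hpp]
    apply aux_sum_shift hF
    intro hcon
    apply hpp
    have : (4:F) * p' = 4 * p := by linear_combination -hcon
    exact mul_left_cancel₀ h4 this

lemma aux_key (hF : ringChar F ≠ 2) (X₁ X₂ : Finset F)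
    (h : 2 * Fintype.card F < X₁.card * X₂.card) :
    ∃ s ∈ X₁, ∃ p ∈ X₂, quadraticChar F (s^2 - 4*p) ≠ -1 := by
  by_contra hcon
  push_neg at hcon
  set q : ℤ := (Fintype.card F : ℤ) with hq
  set M : ℤ := (X₁.card : ℤ) * (X₂.card : ℤ) with hM
  have hMq : 2 * q < M := by rw [hq, hM]; exact_mod_cast h
  have hq0 : 0 ≤ q := Int.natCast_nonneg _
  set g : F → ℤ := fun t => ∑ p ∈ X₂, quadraticChar F (t - 4*p) with hg
  set E : ℤ := ∑ s ∈ X₁, g (s^2) with hE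
  -- E = -M under the assumption
  have hEval : E = -M := by
    rw [hE, hg]
    have : ∀ s ∈ X₁, ∑ p ∈ X₂, quadraticChar F (s^2 - 4*p) = -(X₂.card : ℤ) := by
      intro s hs
      rw [Finset.sum_congr rfl fun p hp => hcon s hs p hp, Finset.sum_const]
      simp
    rw [Finset.sum_congr rfl this, Finset.sum_const]
    simp [hM]
  -- bound E^2
  have step1 : E^2 ≤ (X₁.card : ℤ) * ∑ s ∈ X₁, (g (s^2))^2 := by
    simpa using sq_sum_le_card_mul_sum_sq (s := X₁) (f := fun s => g (s^2))
  have step2 : ∑ s ∈ X₁, (g (s^2))^2 ≤ ∑ s : F, (g (s^2))^2 :=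
    Finset.sum_le_sum_of_subset_of_nonneg (Finset.subset_univ _)
      (fun i _ _ => sq_nonneg _)
  have step3 : ∑ s : F, (g (s^2))^2 = ∑ t : F, (quadraticChar F t + 1) * (g t)^2 :=
    aux_sum_sq hF (fun t => (g t)^2)
  have step4 : ∑ t : F, (quadraticChar F t + 1) * (g t)^2 ≤ 2 * ∑ t : F, (g t)^2 := by
    rw [Finset.mul_sum]
    refine Finset.sum_le_sum fun t _ => ?_
    have h1 : quadraticChar F t + 1 ≤ 2 := by have := aux_chi_le t; omega
    exact mul_le_mul_of_nonneg_right h1 (sq_nonneg _) |>.trans_eq rfl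
  have step5 : ∑ t : F, (g t)^2 ≤ (X₂.card : ℤ) * q := by
    have expand : ∑ t : F, (g t)^2
        = ∑ p ∈ X₂, ∑ p' ∈ X₂, ∑ t : F, quadraticChar F ((t - 4*p) * (t - 4*p')) := by
      simp_rw [hg, sq, Finset.sum_mul_sum, map_mul]
      rw [Finset.sum_comm]
      refine Finset.sum_congr rfl fun p _ => ?_
      rw [Finset.sum_comm]
    rw [expand]
    have hb : ∀ p ∈ X₂, ∑ p' ∈ X₂, ∑ t : F, quadraticChar F ((t - 4*p) * (t - 4*p')) ≤ q := by
      intro p hp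
      have : ∑ p' ∈ X₂, ∑ t : F, quadraticChar F ((t - 4*p) * (t - 4*p'))
          ≤ ∑ p' ∈ X₂, (if p' = p then q else 0) := by
        refine Finset.sum_le_sum fun p' _ => ?_
        have hi := aux_inner hF p p'
        rw [show ∑ t : F, quadraticChar F ((t - 4*p) * (t - 4*p'))
            = ∑ t : F, quadraticChar F ((t - 4*p') * (t - 4*p)) from
            Finset.sum_congr rfl fun t _ => by rw [mul_comm], aux_inner hF p' p]
        by_cases hpp : p = p' <;> simp [hpp, hq0] <;> omega
      calc _ ≤ _ := this
        _ = q := by rw [Finset.sum_ite_eq' X₂ p fun _ => q, if_pos hp]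
    calc ∑ p ∈ X₂, ∑ p' ∈ X₂, ∑ t : F, quadraticChar F ((t - 4*p) * (t - 4*p'))
        ≤ ∑ p ∈ X₂, q := Finset.sum_le_sum hb
      _ = (X₂.card : ℤ) * q := by rw [Finset.sum_const]; ring
  have hbound : E^2 ≤ 2 * q * M := by
    calc E^2 ≤ (X₁.card : ℤ) * ∑ s ∈ X₁, (g (s^2))^2 := step1
      _ ≤ (X₁.card : ℤ) * ∑ s : F, (g (s^2))^2 := by
          exact mul_le_mul_of_nonneg_left step2 (Int.natCast_nonneg _)
      _ = (X₁.card : ℤ) * ∑ t : F, (quadraticChar F t + 1) * (g t)^2 := by rw [step3]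
      _ ≤ (X₁.card : ℤ) * (2 * ∑ t : F, (g t)^2) := by
          exact mul_le_mul_of_nonneg_left step4 (Int.natCast_nonneg _)
      _ ≤ (X₁.card : ℤ) * (2 * ((X₂.card : ℤ) * q)) := by
          have h2 : (0:ℤ) ≤ 2 := by norm_num
          gcongr
      _ = 2 * q * M := by rw [hM]; ring
  rw [hEval] at hbound
  nlinarith [hMq, hq0]

end Aux

theorem sum_in_product_in {F : Type*} [Field F] [Fintype F] [DecidableEq F]
    (hodd : Odd (Fintype.card F)) (X₁ X₂ : Finset F)
    (h : 2 * Fintype.card F < X₁.card * X₂.card) :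
    ∃ x y : F, x + y ∈ X₁ ∧ x * y ∈ X₂ := by
  have hF : ringChar F ≠ 2 := by
    intro h2
    have := FiniteField.even_card_of_char_two h2
    have := Nat.odd_iff.mp hodd
    omega
  have h2 : (2:F) ≠ 0 := Ring.two_ne_zero hF
  obtain ⟨s, hs, p, hp, hne⟩ := aux_key hF X₁ X₂ h
  have hsq : IsSquare (s^2 - 4*p) := by
    by_contra hns
    exact hne (quadraticChar_neg_one_iff_not_isSquare.mpr hns)
  obtain ⟨z, hz⟩ := hsq
  refine ⟨(s+z)/2, (s-z)/2, ?_, ?_⟩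
  · have he : (s+z)/2 + (s-z)/2 = s := by field_simp; ring
    rwa [he]
  · have he : ((s+z)/2) * ((s-z)/2) = p := by
      field_simp
      linear_combination hz
    rwa [he]
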